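/- Let ρ be an ordered tolerance on a lattice L. Define the binary relation ξ on L by: x ξ y iff ρ (x ∧ y) (x ∨ y). Then ξ is a tolerance on L, ξ agrees with ρ on pairs of comparable elements (for x ≤ y, x ξ y iff ρ x y), and ξ is the unique tolerance on L whose restriction to pairs of comparable elements equals ρ. -/
import Mathlib


def IsTolerance {L : Type u} [Lattice L] (ξ : L → L → Prop) : Prop :=
  (∀ x, ξ x x) ∧ (∀ x y, ξ x y → ξ y x) ∧
  (∀ a b c d, ξ a b → ξ c d → ξ (a ⊔ c) (b ⊔ d)) ∧
  (∀ a b c d, ξ a b → ξ c d → ξ (a ⊓ c) (b ⊓ d))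

def IsOrderedTolerance {L : Type u} [Lattice L] (ρ : L → L → Prop) : Prop :=
  (∀ x y, ρ x y → x ≤ y) ∧ (∀ x, ρ x x) ∧
  (∀ x x' y y', ρ x x' → ρ y y' → ρ (x ⊓ y) (x' ⊓ y')) ∧
  (∀ x x' y y', ρ x x' → ρ y y' → ρ (x ⊔ y) (x' ⊔ y'))

theorem orderedTolerance_extends_uniquely {L : Type u} [Lattice L]
    (ρ : L → L → Prop) (hρ : IsOrderedTolerance ρ)
    (ξ : L → L → Prop) (hdef : ∀ x y, ξ x y ↔ ρ (x ⊓ y) (x ⊔ y)) :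
    IsTolerance ξ ∧ (∀ x y : L, x ≤ y → (ξ x y ↔ ρ x y)) ∧
      (∀ ξ' : L → L → Prop, IsTolerance ξ' →
        (∀ x y : L, x ≤ y → (ξ' x y ↔ ρ x y)) → ξ' = ξ) := by
  obtain ⟨hle, hrefl, hmeet, hjoin⟩ := hρ
  -- interpolation: if ρ u v and u ≤ w ≤ v then ρ w v and ρ u w
  have hup : ∀ u v w : L, ρ u v → u ≤ w → ρ w (v ⊔ w) := by
    intro u v w huv huw
    have := hjoin u v w w huv (hrefl w)
    rwa [sup_eq_right.mpr huw] at this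
  have hdown : ∀ u v w : L, ρ u v → w ≤ v → ρ (u ⊓ w) w := by
    intro u v w huv hwv
    have := hmeet u v w w huv (hrefl w)
    rwa [inf_eq_right.mpr hwv] at this
  have hinterp : ∀ u v w : L, ρ u v → u ≤ w → w ≤ v → ρ w v := by
    intro u v w huv huw hwv
    have := hup u v w huv huw
    rwa [sup_eq_left.mpr hwv] at this
  have hinterp' : ∀ u v w : L, ρ u v → u ≤ w → w ≤ v → ρ u w := by
    intro u v w huv huw hwv
    have := hdown u v w huv hwv
    rwa [inf_eq_left.mpr huw] at this
  have htol : IsTolerance ξ := by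
    refine ⟨fun x => ?_, fun x y h => ?_, fun a b c d hab hcd => ?_, fun a b c d hab hcd => ?_⟩
    · rw [hdef]; simpa using hrefl x
    · rw [hdef] at h ⊢; rwa [inf_comm, sup_comm]
    · rw [hdef] at hab hcd ⊢
      have h1 := hjoin _ _ _ _ hab hcd
      rw [sup_sup_sup_comm a c b d]
      refine hinterp _ _ _ h1 ?_ ?_
      · exact sup_le (le_inf (le_sup_of_le_left inf_le_left)
            (le_sup_of_le_left inf_le_right))
          (le_inf (le_sup_of_le_right inf_le_left) (le_sup_of_le_right inf_le_right))
      · exact le_trans inf_le_left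
          (sup_le (le_sup_of_le_left le_sup_left) (le_sup_of_le_right le_sup_left))
    · rw [hdef] at hab hcd ⊢
      have h1 := hmeet _ _ _ _ hab hcd
      rw [inf_inf_inf_comm a c b d]
      refine hinterp' _ _ _ h1 ?_ ?_
      · exact le_trans (le_inf (inf_le_of_left_le inf_le_left)
            (inf_le_of_right_le inf_le_left)) le_sup_left
      · exact sup_le (le_inf (inf_le_of_left_le le_sup_left)
            (inf_le_of_right_le le_sup_left))
          (le_inf (inf_le_of_left_le le_sup_right) (inf_le_of_right_le le_sup_right))
  have hagree : ∀ x y : L, x ≤ y → (ξ x y ↔ ρ x y) := by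
    intro x y hxy
    rw [hdef, inf_eq_left.mpr hxy, sup_eq_right.mpr hxy]
  refine ⟨htol, hagree, ?_⟩
  intro ξ' ⟨hrefl', hsymm', hjoin', hmeet'⟩ hag
  funext x y
  apply propext
  constructor
  · intro h
    -- ξ' x y → ρ (x⊓y) x and ρ(x⊓y) y → ρ(x⊓y)(x⊔y) → ξ x y
    have h1 : ξ' (x ⊓ y) y := by
      have := hmeet' x y y y h (hrefl' y)
      rwa [inf_idem] at this
    have h2 : ξ' (x ⊓ y) x := by
      have := hmeet' x y x x h (hrefl' x)
      rw [inf_idem] at this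
      rw [inf_comm]
      exact hsymm' _ _ this
    have r1 : ρ (x ⊓ y) y := (hag _ _ inf_le_right).mp h1
    have r2 : ρ (x ⊓ y) x := (hag _ _ inf_le_left).mp h2
    have := hjoin _ _ _ _ r2 r1
    rw [sup_idem] at this
    exact (hdef x y).mpr this
  · intro h
    have h0 : ξ' (x ⊓ y) (x ⊔ y) :=
      (hag _ _ (inf_le_left.trans le_sup_left)).mpr ((hdef x y).mp h)
    have hx : ξ' x (x ⊔ y) := by
      have := hjoin' _ _ x x h0 (hrefl' x)
      rwa [sup_comm (x ⊓ y) x, sup_inf_self, sup_right_comm, sup_idem] at this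
    have hy : ξ' y (x ⊔ y) := by
      have := hjoin' _ _ y y h0 (hrefl' y)
      rwa [sup_comm (x ⊓ y) y, inf_comm x y, sup_inf_self, sup_assoc, sup_idem] at this
    have := hmeet' _ _ _ _ hx (hsymm' _ _ hy)
    rwa [inf_sup_self, inf_comm (x ⊔ y) y, sup_comm x y, inf_sup_self] at this
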